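/- arXiv:1409.5200 — 2 statements merged into one kernel-verified Lean document; each statement's English description precedes it below -/
import Mathlib

section
/- Combining the rounding bound and the approximation lemma: with v' defined by rounding weights down by a factor k = ε·w_max/l_bin (where w_max ≥ v(N) and lengths satisfy l_j ≥ 1), the Shapley value φ'_i computed with respect to v' satisfies |φ_i - φ'_i| ≤ ε·w_max for every agent i. -/
open Finset

/-- Value function of a knapsack budgeted game. -/
def knapsackValue {ι : Type*} [DecidableEq ι] (l w : ι → ℕ) (lbin : ℕ) (S : Finset ι) : ℕ :=
  (S.powerset.filter (fun T => ∑ k ∈ T, l k ≤ lbin)).sup (fun T => ∑ k ∈ T, w k)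

noncomputable def shapley {ι : Type*} [DecidableEq ι] (N : Finset ι) (v : Finset ι → ℝ) (i : ι) : ℝ :=
  ∑ S ∈ (N.erase i).powerset,
    ((Nat.factorial S.card * Nat.factorial (N.card - S.card - 1) : ℝ) / (Nat.factorial N.card : ℝ))
      * (v (insert i S) - v S)

lemma feasible_le {ι : Type*} [DecidableEq ι] (l w : ι → ℕ) (lbin : ℕ) {S T : Finset ι}
    (hTS : T ⊆ S) (hTl : ∑ k ∈ T, l k ≤ lbin) :
    ∑ k ∈ T, w k ≤ knapsackValue l w lbin S :=
  Finset.le_sup (f := fun T => ∑ k ∈ T, w k)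
    (by simp [Finset.mem_filter, Finset.mem_powerset, hTS, hTl])

lemma exists_opt {ι : Type*} [DecidableEq ι] (l w : ι → ℕ) (lbin : ℕ) (S : Finset ι) :
    ∃ T, T ⊆ S ∧ ∑ k ∈ T, l k ≤ lbin ∧ knapsackValue l w lbin S = ∑ k ∈ T, w k := by
  have hne : (S.powerset.filter (fun T => ∑ k ∈ T, l k ≤ lbin)).Nonempty :=
    ⟨∅, by simp⟩
  obtain ⟨T, hT, hval⟩ := Finset.exists_mem_eq_sup _ hne (fun T => ∑ k ∈ T, w k)
  rw [Finset.mem_filter, Finset.mem_powerset] at hT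
  exact ⟨T, hT.1, hT.2, hval⟩

lemma kv_le {ι : Type*} [DecidableEq ι] (l w : ι → ℕ) (lbin : ℕ) {k : ℝ} (hk : 0 < k)
    (S : Finset ι) :
    k * (knapsackValue l (fun j => ⌊(w j : ℝ) / k⌋₊) lbin S : ℝ) ≤
      (knapsackValue l w lbin S : ℝ) := by
  obtain ⟨T, hTS, hTl, hval⟩ := exists_opt l (fun j => ⌊(w j : ℝ) / k⌋₊) lbin S
  rw [hval]
  have h1 : ∀ j, k * (⌊(w j : ℝ) / k⌋₊ : ℝ) ≤ (w j : ℝ) := by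
    intro j
    have hfl := Nat.floor_le (R := ℝ) (div_nonneg (Nat.cast_nonneg (w j)) hk.le)
    calc k * (⌊(w j : ℝ) / k⌋₊ : ℝ) ≤ k * ((w j : ℝ) / k) :=
          mul_le_mul_of_nonneg_left hfl hk.le
      _ = (w j : ℝ) := by rw [mul_comm, div_mul_cancel₀ _ (ne_of_gt hk)]
  calc k * ((∑ j ∈ T, ⌊(w j : ℝ) / k⌋₊ : ℕ) : ℝ)
      = ∑ j ∈ T, k * (⌊(w j : ℝ) / k⌋₊ : ℝ) := by
        push_cast; rw [Finset.mul_sum]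
    _ ≤ ∑ j ∈ T, (w j : ℝ) := Finset.sum_le_sum (fun j _ => h1 j)
    _ = ((∑ j ∈ T, w j : ℕ) : ℝ) := by push_cast; ring
    _ ≤ (knapsackValue l w lbin S : ℝ) := by
        exact_mod_cast feasible_le l w lbin hTS hTl

lemma v_le {ι : Type*} [DecidableEq ι] (l w : ι → ℕ) (lbin : ℕ) {k : ℝ} (hk : 0 < k)
    (hl : ∀ j, 1 ≤ l j) (S : Finset ι) :
    (knapsackValue l w lbin S : ℝ) ≤
      k * (knapsackValue l (fun j => ⌊(w j : ℝ) / k⌋₊) lbin S : ℝ) + k * lbin := by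
  obtain ⟨T, hTS, hTl, hval⟩ := exists_opt l w lbin S
  rw [hval]
  have hcard : (T.card : ℝ) ≤ (lbin : ℝ) := by
    have : T.card ≤ ∑ j ∈ T, l j := by
      calc T.card = ∑ j ∈ T, 1 := by simp
        _ ≤ ∑ j ∈ T, l j := Finset.sum_le_sum (fun j _ => hl j)
    exact_mod_cast this.trans hTl
  have h1 : ∀ j, (w j : ℝ) ≤ k * (⌊(w j : ℝ) / k⌋₊ : ℝ) + k := by
    intro j
    have h2 : (w j : ℝ) / k ≤ (⌊(w j : ℝ) / k⌋₊ : ℝ) + 1 :=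
      (Nat.lt_floor_add_one ((w j : ℝ) / k)).le
    calc (w j : ℝ) = k * ((w j : ℝ) / k) := by
          rw [mul_comm, div_mul_cancel₀ _ (ne_of_gt hk)]
      _ ≤ k * ((⌊(w j : ℝ) / k⌋₊ : ℝ) + 1) := mul_le_mul_of_nonneg_left h2 hk.le
      _ = k * (⌊(w j : ℝ) / k⌋₊ : ℝ) + k := by ring
  calc ((∑ j ∈ T, w j : ℕ) : ℝ) = ∑ j ∈ T, (w j : ℝ) := by push_cast; ring
    _ ≤ ∑ j ∈ T, (k * (⌊(w j : ℝ) / k⌋₊ : ℝ) + k) := Finset.sum_le_sum (fun j _ => h1 j)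
    _ = k * ((∑ j ∈ T, ⌊(w j : ℝ) / k⌋₊ : ℕ) : ℝ) + k * T.card := by
        rw [Finset.sum_add_distrib, Finset.sum_const]
        push_cast
        rw [Finset.mul_sum]
        ring
    _ ≤ k * (knapsackValue l (fun j => ⌊(w j : ℝ) / k⌋₊) lbin S : ℝ) + k * lbin := by
        have h3 : ((∑ j ∈ T, ⌊(w j : ℝ) / k⌋₊ : ℕ) : ℝ) ≤
            (knapsackValue l (fun j => ⌊(w j : ℝ) / k⌋₊) lbin S : ℝ) := by
          exact_mod_cast feasible_le l (fun j => ⌊(w j : ℝ) / k⌋₊) lbin hTS hTl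
        have h4 := mul_le_mul_of_nonneg_left h3 hk.le
        have h5 := mul_le_mul_of_nonneg_left hcard hk.le
        linarith

lemma coeff_sum {ι : Type*} [DecidableEq ι] (N : Finset ι) (i : ι) (hi : i ∈ N) :
    ∑ S ∈ (N.erase i).powerset,
      ((Nat.factorial S.card * Nat.factorial (N.card - S.card - 1) : ℝ) /
        (Nat.factorial N.card : ℝ)) = 1 := by
  set n := N.card with hn
  have hn1 : 1 ≤ n := Finset.card_pos.mpr ⟨i, hi⟩
  have hm : (N.erase i).card = n - 1 := by rw [Finset.card_erase_of_mem hi]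
  have key := Finset.sum_powerset_apply_card
    (fun m => ((Nat.factorial m * Nat.factorial (n - m - 1) : ℝ) / (Nat.factorial n : ℝ)))
    (x := N.erase i)
  rw [key, hm]
  have hrange : n - 1 + 1 = n := Nat.succ_pred_eq_of_pos hn1
  rw [hrange]
  have hterm : ∀ m ∈ Finset.range n,
      (n-1).choose m • ((Nat.factorial m * Nat.factorial (n - m - 1) : ℝ) / (Nat.factorial n : ℝ))
        = (Nat.factorial (n-1) : ℝ) / (Nat.factorial n : ℝ) := by
    intro m hm'
    rw [Finset.mem_range] at hm'
    have hmle : m ≤ n - 1 := Nat.le_pred_of_lt hm'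
    have hch := Nat.choose_mul_factorial_mul_factorial hmle
    have hchR : (((n-1).choose m : ℝ)) * (Nat.factorial m : ℝ) * (Nat.factorial (n-1-m) : ℝ)
        = (Nat.factorial (n-1) : ℝ) := by exact_mod_cast congrArg (Nat.cast (R := ℝ)) hch
    have hsub : n - m - 1 = n - 1 - m := by omega
    rw [nsmul_eq_mul, hsub, ← hchR]
    ring
  rw [Finset.sum_congr rfl hterm, Finset.sum_const, Finset.card_range, nsmul_eq_mul]
  have hfact : (Nat.factorial n : ℝ) = n * Nat.factorial (n - 1) := by
    exact_mod_cast (Nat.mul_factorial_pred (by omega : n ≠ 0)).symm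
  rw [hfact]
  have hpos : (0:ℝ) < Nat.factorial (n-1) := by positivity
  have hnpos : (0:ℝ) < n := by exact_mod_cast hn1
  field_simp

theorem knapsack_rounded_shapley_approx {ι : Type*} [DecidableEq ι] (N : Finset ι)
    (l w : ι → ℕ) (lbin : ℕ) (hlbin : 1 ≤ lbin) (hl : ∀ j, 1 ≤ l j)
    (ε wmax : ℝ) (hε : 0 < ε) (hwmax : (knapsackValue l w lbin N : ℝ) ≤ wmax)
    (k : ℝ) (hkdef : k = ε * wmax / lbin) (hk : 0 < k)
    (i : ι) (hi : i ∈ N) :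
    |shapley N (fun S => (knapsackValue l w lbin S : ℝ)) i -
        shapley N (fun S => k * (knapsackValue l (fun j => ⌊(w j : ℝ) / k⌋₊) lbin S : ℝ)) i| ≤
      ε * wmax := by
  have hlbin' : (0:ℝ) < lbin := by exact_mod_cast hlbin
  have hklbin : k * lbin = ε * wmax := by
    rw [hkdef]; field_simp
  set v : Finset ι → ℝ := fun S => (knapsackValue l w lbin S : ℝ) with hv
  set v' : Finset ι → ℝ := fun S => k * (knapsackValue l (fun j => ⌊(w j : ℝ) / k⌋₊) lbin S : ℝ)
    with hv'
  have hbd : ∀ S : Finset ι, 0 ≤ v S - v' S ∧ v S - v' S ≤ k * lbin := by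
    intro S
    have h1 := kv_le l w lbin hk S
    have h2 := v_le l w lbin hk hl S
    constructor <;> simp only [hv, hv'] <;> linarith
  unfold shapley
  rw [← Finset.sum_sub_distrib]
  have habs : ∀ S ∈ (N.erase i).powerset,
      |((Nat.factorial S.card * Nat.factorial (N.card - S.card - 1) : ℝ) /
          (Nat.factorial N.card : ℝ)) * (v (insert i S) - v S) -
        ((Nat.factorial S.card * Nat.factorial (N.card - S.card - 1) : ℝ) /
          (Nat.factorial N.card : ℝ)) * (v' (insert i S) - v' S)| ≤
      ((Nat.factorial S.card * Nat.factorial (N.card - S.card - 1) : ℝ) /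
          (Nat.factorial N.card : ℝ)) * (k * lbin) := by
    intro S _
    rw [← mul_sub, abs_mul]
    have hcnn : (0:ℝ) ≤ (Nat.factorial S.card * Nat.factorial (N.card - S.card - 1) : ℝ) /
        (Nat.factorial N.card : ℝ) := by positivity
    rw [abs_of_nonneg hcnn]
    apply mul_le_mul_of_nonneg_left _ hcnn
    have h1 := hbd (insert i S)
    have h2 := hbd S
    rw [abs_le]
    constructor <;> [linarith [h1.1, h1.2, h2.1, h2.2]; linarith [h1.1, h1.2, h2.1, h2.2]]
  calc |∑ S ∈ (N.erase i).powerset, _| ≤ _ := Finset.abs_sum_le_sum_abs _ _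
    _ ≤ ∑ S ∈ (N.erase i).powerset,
        ((Nat.factorial S.card * Nat.factorial (N.card - S.card - 1) : ℝ) /
          (Nat.factorial N.card : ℝ)) * (k * lbin) := Finset.sum_le_sum habs
    _ = (k * lbin) * ∑ S ∈ (N.erase i).powerset,
        ((Nat.factorial S.card * Nat.factorial (N.card - S.card - 1) : ℝ) /
          (Nat.factorial N.card : ℝ)) := by
          rw [Finset.mul_sum]
          exact Finset.sum_congr rfl (fun S _ => by ring)
    _ = k * lbin := by rw [coeff_sum N i hi, mul_one]
    _ = ε * wmax := hklbin
end

section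
/- In the multi-issue representation where v(S) = Σ_{i=1}^{t} v_i(S ∩ C_i) for subsets C_1, …, C_t ⊆ N and games v_i : 2^{C_i} → ℝ with v_i(∅) = 0, the Shapley value decomposes: φ_j(v) = Σ_{i : j ∈ C_i} φ_j^{C_i}(v_i), where φ_j^{C_i}(v_i) is the Shapley value of agent j in the cooperative game (C_i, v_i). -/
open Finset

lemma coef_add (a b : ℕ) :
    ((a.factorial * (b+1).factorial : ℝ)) / ((a+b+2).factorial)
      + (((a+1).factorial * b.factorial : ℝ)) / ((a+b+2).factorial)
      = (a.factorial * b.factorial : ℝ) / ((a+b+1).factorial) := by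
  have h2 : (a+b+2).factorial = (a+b+2) * (a+b+1).factorial := rfl
  have hb : (b+1).factorial = (b+1) * b.factorial := rfl
  have ha : (a+1).factorial = (a+1) * a.factorial := rfl
  have f1 : ((a+b+1).factorial : ℝ) ≠ 0 := Nat.cast_ne_zero.2 (Nat.factorial_ne_zero _)
  have f2 : ((a+b+2) : ℝ) ≠ 0 := by positivity
  rw [h2, hb, ha]
  push_cast
  field_simp
  ring

lemma shapley_erase_dummy {ι : Type*} [DecidableEq ι] (N : Finset ι) (w : Finset ι → ℝ)
    (k j : ι) (hk : k ∈ N) (hj : j ∈ N) (hjk : j ≠ k)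
    (hw : ∀ S, w (S.erase k) = w S) :
    shapley N w j = shapley (N.erase k) w j := by
  classical
  set M := (N.erase j).erase k with hM
  have hkM : k ∉ M := notMem_erase _ _
  have hins : N.erase j = insert k M := by
    rw [hM, insert_erase (mem_erase.2 ⟨Ne.symm hjk, hk⟩)]
  have hM2 : (N.erase k).erase j = M := by
    rw [hM, erase_right_comm]
  have hcardN : N.card = M.card + 2 := by
    have h1 : (N.erase j).card = N.card - 1 := card_erase_of_mem hj
    have h2 : (insert k M).card = M.card + 1 := card_insert_of_notMem hkM
    have h3 : 1 ≤ N.card := card_pos.2 ⟨j, hj⟩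
    rw [hins] at h1
    omega
  have hcardNk : (N.erase k).card = M.card + 1 := by
    have := card_erase_of_mem hk; omega
  unfold shapley
  rw [hins, sum_powerset_insert hkM, hM2, ← sum_add_distrib]
  refine sum_congr rfl fun T hT => ?_
  have hTM : T ⊆ M := mem_powerset.1 hT
  have hkT : k ∉ T := fun h => hkM (hTM h)
  have hcT : T.card ≤ M.card := card_le_card hTM
  have hckT : (insert k T).card = T.card + 1 := card_insert_of_notMem hkT
  have hw1 : w (insert k T) = w T := by
    rw [← hw (insert k T), erase_insert hkT]
  have hw2 : w (insert j (insert k T)) = w (insert j T) := by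
    rw [← hw (insert j (insert k T)), Finset.insert_comm, erase_insert (by
      simp [mem_insert, hkT, Ne.symm hjk])]
  rw [hw1, hw2, hckT, hcardN, hcardNk]
  set a := T.card
  set b := M.card - a with hb
  have hab : M.card = a + b := by omega
  have e1 : a + b + 2 - a - 1 = b + 1 := by omega
  have e2 : a + b + 2 - (a + 1) - 1 = b := by omega
  have e3 : a + b + 1 - a - 1 = b := by omega
  rw [hab, e1, e2, e3]
  rw [← coef_add a b]
  ring

lemma shapley_carrier {ι : Type*} [DecidableEq ι] (u : Finset ι → ℝ) (C : Finset ι) (j : ι)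
    (hj : j ∈ C) : ∀ N : Finset ι, C ⊆ N →
    shapley N (fun S => u (S ∩ C)) j = shapley C (fun S => u (S ∩ C)) j := by
  classical
  intro N
  induction N using Finset.strongInduction with
  | _ N ih =>
    intro hCN
    rcases eq_or_ssubset_of_subset hCN with rfl | hss
    · rfl
    · obtain ⟨k, hkN, hkC⟩ := exists_of_ssubset hss
      have hjk : j ≠ k := fun h => hkC (h ▸ hj)
      rw [shapley_erase_dummy N _ k j hkN (hCN hj) hjk (fun S => by
        rw [erase_inter, erase_eq_of_notMem (fun h => hkC (mem_inter.1 h).2)])]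
      exact ih (N.erase k) (erase_ssubset hkN) (subset_erase.2 ⟨hCN, hkC⟩)

lemma shapley_null {ι : Type*} [DecidableEq ι] (u : Finset ι → ℝ) (C N : Finset ι) (j : ι)
    (hj : j ∉ C) : shapley N (fun S => u (S ∩ C)) j = 0 := by
  unfold shapley
  refine sum_eq_zero fun S _ => ?_
  simp only [insert_inter_of_notMem hj]
  ring

theorem multi_issue_shapley_decomposition {ι : Type*} [DecidableEq ι] (N : Finset ι)
    (t : ℕ) (C : Fin t → Finset ι) (hC : ∀ i, C i ⊆ N)
    (v : Fin t → Finset ι → ℝ) (hv0 : ∀ i, v i ∅ = 0)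
    (j : ι) (hj : j ∈ N) :
    shapley N (fun S => ∑ i : Fin t, v i (S ∩ C i)) j =
      ∑ i ∈ Finset.univ.filter (fun i : Fin t => j ∈ C i), shapley (C i) (v i) j := by
  classical
  have hlin : shapley N (fun S => ∑ i : Fin t, v i (S ∩ C i)) j
      = ∑ i : Fin t, shapley N (fun S => v i (S ∩ C i)) j := by
    unfold shapley
    rw [sum_comm]
    refine sum_congr rfl fun S _ => ?_
    rw [← sum_sub_distrib, mul_sum]
  rw [hlin, ← sum_filter_add_sum_filter_not univ (fun i : Fin t => j ∈ C i)]
  have h0 : ∑ i ∈ univ.filter (fun i : Fin t => ¬ j ∈ C i),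
      shapley N (fun S => v i (S ∩ C i)) j = 0 := by
    refine sum_eq_zero fun i hi => ?_
    exact shapley_null (v i) (C i) N j (mem_filter.1 hi).2
  rw [h0, add_zero]
  refine sum_congr rfl fun i hi => ?_
  have hjC : j ∈ C i := (mem_filter.1 hi).2
  rw [shapley_carrier (v i) (C i) j hjC N (hC i)]
  unfold shapley
  refine sum_congr rfl fun S hS => ?_
  have hS' : S ⊆ C i := (mem_powerset.1 hS).trans (erase_subset _ _)
  simp only [inter_eq_left.2 hS', inter_eq_left.2 (insert_subset hjC hS')]
end
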